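/- Let η : [0,∞) → [0,∞) be a C¹ function with η' absolutely continuous, satisfying η''(δ) ≥ 2μ η(δ) for a.e. δ ≥ 0 with μ > 0, with η(δ) → 0 and η'(δ) → 0 as δ → ∞. Then η'(δ) ≤ 0 for all δ ≥ 0, η'(t)² ≥ 2μ η(t)² for all t ≥ 0, and consequently η(δ) ≤ η(0) e^{−√(2μ) δ} for all δ ≥ 0. -/

import Mathlib

open MeasureTheory Set Filter Topology

/-- Auxiliary: a right derivative of a nonnegative function vanishing at the
base point is nonnegative. -/
lemma aux_deriv_nonneg (s d : ℝ) (h : ℝ → ℝ)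
    (hd : HasDerivWithinAt h d (Ici s) s) (h0 : h s = 0)
    (hpos : ∀ t, s ≤ t → 0 ≤ h t) : 0 ≤ d := by
  have hslope := hasDerivWithinAt_iff_tendsto_slope.mp hd
  rw [Set.Ici_sdiff_left] at hslope
  refine ge_of_tendsto hslope ?_
  filter_upwards [self_mem_nhdsWithin] with t (ht : s < t)
  rw [slope_def_field, h0, sub_zero]
  exact div_nonneg (hpos t ht.le) (by linarith)

/-- Gronwall-type differential inequality: if η ≥ 0 is C¹ on
[0,∞) with absolutely continuous derivative, η'' ≥ 2μη a.e. (μ > 0), and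
η, η' → 0 at +∞, then η' ≤ 0 on [0,∞), η'(t)² ≥ 2μ η(t)² for all t ≥ 0,
and η(δ) ≤ η(0) e^{−√(2μ) δ} for all δ ≥ 0. -/
theorem gronwall_convexity_decay
    (μ : ℝ) (hμ : 0 < μ) (η η' η'' : ℝ → ℝ)
    (hnonneg : ∀ δ : ℝ, 0 ≤ δ → 0 ≤ η δ)
    -- η is C¹ on [0,∞) with derivative η'
    (hC1 : ∀ δ : ℝ, 0 ≤ δ → HasDerivWithinAt η (η' δ) (Ici 0) δ)
    (hη'cont : ContinuousOn η' (Ici 0))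
    -- η' is absolutely continuous with derivative η''
    (hAC : ∀ δ : ℝ, 0 ≤ δ → η' δ = η' 0 + ∫ s in (0:ℝ)..δ, η'' s)
    (hη''int : ∀ δ : ℝ, 0 ≤ δ → IntervalIntegrable η'' volume 0 δ)
    -- the convexity inequality η'' ≥ 2μη a.e. on [0,∞)
    (hineq : ∀ᵐ δ ∂volume, 0 ≤ δ → 2 * μ * η δ ≤ η'' δ)
    -- decay at infinity
    (hlim : Tendsto η atTop (𝓝 0))
    (hlim' : Tendsto η' atTop (𝓝 0)) :
    (∀ δ : ℝ, 0 ≤ δ → η' δ ≤ 0) ∧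
    (∀ t : ℝ, 0 ≤ t → 2 * μ * (η t) ^ 2 ≤ (η' t) ^ 2) ∧
    (∀ δ : ℝ, 0 ≤ δ → η δ ≤ η 0 * Real.exp (-Real.sqrt (2 * μ) * δ)) := by
  set c : ℝ := Real.sqrt (2 * μ) with hcdef
  have h2μ : (0:ℝ) ≤ 2 * μ := by linarith
  have hc0 : 0 < c := Real.sqrt_pos.mpr (by linarith)
  have hc2 : c ^ 2 = 2 * μ := Real.sq_sqrt h2μ
  have hηcont : ContinuousOn η (Ici 0) := fun x hx => (hC1 x hx).continuousWithinAt
  -- Key lemma: decay from any base point s.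
  have key : ∀ s : ℝ, 0 ≤ s → ∀ t : ℝ, s ≤ t →
      η t ≤ η s * Real.exp (-c * (t - s)) := by
    intro s hs
    set K : ℝ := η s with hK
    set φ : ℝ → ℝ := fun t => K * Real.exp (-c * (t - s)) with hφ
    have hφd : ∀ t : ℝ, HasDerivAt φ (-c * φ t) t := by
      intro t
      have h1 : HasDerivAt (fun t : ℝ => -c * (t - s)) (-c) t := by
        simpa using ((hasDerivAt_id t).sub_const s).const_mul (-c)
      have h2 := (Real.hasDerivAt_exp (-c * (t - s))).comp t h1
      have h3 := h2.const_mul K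
      refine h3.congr_deriv ?_
      simp [hφ]
      ring
    have hφcont : Continuous φ :=
      continuous_const.mul
        (Real.continuous_exp.comp (continuous_const.mul (continuous_id.sub continuous_const)))
    set ψ : ℝ → ℝ := fun t => η t - φ t with hψ
    have hψ0 : ψ s = 0 := by simp [hψ, hφ, hK]
    have hψd : ∀ t : ℝ, 0 ≤ t →
        HasDerivWithinAt ψ (η' t + c * φ t) (Ici 0) t := by
      intro t ht
      have := (hC1 t ht).sub (hφd t).hasDerivWithinAt
      refine this.congr_deriv ?_
      ring
    have hψdAt : ∀ t : ℝ, 0 < t → HasDerivAt ψ (η' t + c * φ t) t := by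
      intro t ht
      exact (hψd t ht.le).hasDerivAt (Ici_mem_nhds ht)
    have hψcont : ContinuousOn ψ (Ici 0) := hηcont.sub hφcont.continuousOn
    have hφlim : Tendsto φ atTop (𝓝 0) := by
      have h1 : Tendsto (fun t : ℝ => -c * (t - s)) atTop atBot := by
        apply Tendsto.const_mul_atTop_of_neg (by linarith : -c < 0)
        exact tendsto_atTop_add_const_right atTop (-s) tendsto_id
      have h2 := Real.tendsto_exp_atBot.comp h1
      have := h2.const_mul K
      simpa [hφ, neg_mul] using this
    have hψlim : Tendsto ψ atTop (𝓝 0) := by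
      have := hlim.sub hφlim
      simpa using this
    -- suffices ψ ≤ 0 on [s, ∞)
    suffices hsuff : ∀ t : ℝ, s ≤ t → ψ t ≤ 0 by
      intro t ht
      have := hsuff t ht
      simp only [hψ, hφ] at this
      linarith [this]
    by_contra hcon
    push_neg at hcon
    obtain ⟨t₀, ht₀s, ht₀⟩ := hcon
    -- find T beyond which ψ < ψ t₀
    have hev : ∀ᶠ t in atTop, ψ t < ψ t₀ := hψlim.eventually (eventually_lt_nhds ht₀)
    obtain ⟨T₀, hT₀⟩ := eventually_atTop.mp hev
    set T : ℝ := max T₀ t₀ with hT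
    have hsT : s ≤ T := le_trans ht₀s (le_max_right _ _)
    have hIccsub : Icc s T ⊆ Ici (0:ℝ) := fun x hx => le_trans hs hx.1
    obtain ⟨m, hmIcc, hmax⟩ := (isCompact_Icc (a := s) (b := T)).exists_isMaxOn
      (nonempty_Icc.mpr hsT) (hψcont.mono hIccsub)
    have ht₀mem : t₀ ∈ Icc s T := ⟨ht₀s, le_max_right _ _⟩
    have hm_t₀ : ψ t₀ ≤ ψ m := hmax ht₀mem
    have hψm : 0 < ψ m := lt_of_lt_of_le ht₀ hm_t₀
    have hglobal : ∀ t, s ≤ t → ψ t ≤ ψ m := by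
      intro t ht
      by_cases hT' : t ≤ T
      · exact hmax ⟨ht, hT'⟩
      · push_neg at hT'
        have : ψ t < ψ t₀ := hT₀ t (le_trans (le_max_left _ _) hT'.le)
        linarith
    have hms : s < m := by
      rcases lt_or_eq_of_le hmIcc.1 with h | h
      · exact h
      · exfalso; rw [← h, hψ0] at hψm; exact lt_irrefl 0 hψm
    have hm0 : 0 < m := lt_of_le_of_lt hs hms
    -- derivative vanishes at interior maximum
    have hloc : IsLocalMax ψ m := by
      filter_upwards [Ici_mem_nhds hms] with t ht using hglobal t ht
    have hd0 : η' m + c * φ m = 0 := hloc.hasDerivAt_eq_zero (hψdAt m hm0)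
    -- find ε with ψ > ψ m / 2 on [m, m + ε]
    have hcont_m : ContinuousAt ψ m :=
      (hψcont m hm0.le).continuousAt (Ici_mem_nhds hm0)
    have hev2 : ∀ᶠ t in 𝓝 m, ψ m / 2 < ψ t :=
      hcont_m.eventually (eventually_gt_nhds (half_lt_self hψm))
    obtain ⟨ε, hε, hball⟩ := Metric.eventually_nhds_iff.mp hev2
    set e : ℝ := ε / 2 with he
    have he0 : 0 < e := by positivity
    set t₁ : ℝ := m + e with ht₁
    have hψlower : ∀ t ∈ Icc m t₁, ψ m / 2 < ψ t := by
      intro t ⟨h1, h2⟩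
      apply hball
      rw [Real.dist_eq, abs_of_nonneg (by linarith)]
      simp only [ht₁, he] at h2
      linarith
    set D : ℝ → ℝ := fun t => η' t + c * φ t with hD
    have hDcont : ContinuousOn D (Ici 0) :=
      hη'cont.add ((continuous_const.mul hφcont).continuousOn)
    -- the integral formula for D
    have hη''int' : ∀ t : ℝ, 0 < t → IntervalIntegrable η'' volume m t := by
      intro t ht
      exact (hη''int m hm0.le).symm.trans (hη''int t ht.le)
    have hDformula : ∀ t ∈ Icc m t₁, D t = ∫ x in m..t, (η'' x - 2 * μ * φ x) := by
      intro t ⟨hmt, _⟩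
      have ht0 : 0 < t := lt_of_lt_of_le hm0 hmt
      have h1 : η' t - η' m = ∫ x in m..t, η'' x := by
        rw [hAC t ht0.le, hAC m hm0.le]
        have := intervalIntegral.integral_interval_sub_left (hη''int t ht0.le) (hη''int m hm0.le)
        linarith [this]
      have hφint : IntervalIntegrable (fun x => -c * φ x) volume m t :=
        ((continuous_const.mul hφcont : Continuous fun x => -c * φ x).continuousOn).intervalIntegrable
      have h2 : (∫ x in m..t, -c * φ x) = φ t - φ m :=
        intervalIntegral.integral_eq_sub_of_hasDerivAt
          (fun x _ => hφd x) hφint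
      have h3 : (∫ x in m..t, (η'' x - 2 * μ * φ x))
          = (∫ x in m..t, η'' x) - 2 * μ * ∫ x in m..t, φ x := by
        rw [intervalIntegral.integral_sub (g := fun x => 2 * μ * φ x) (hη''int' t ht0)
          (((continuous_const.mul hφcont : Continuous fun x => 2 * μ * φ x).continuousOn).intervalIntegrable),
          intervalIntegral.integral_const_mul]
      have h4 : (∫ x in m..t, -c * φ x) = -c * ∫ x in m..t, φ x :=
        intervalIntegral.integral_const_mul _ _
      have hDt : D t = (η' t - η' m) + c * (φ t - φ m) + (η' m + c * φ m) := by
        simp only [hD]; ring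
      rw [hDt, hd0, h1, ← h2, h4, h3]
      have : c * (-c * ∫ x in m..t, φ x) = -(2*μ) * ∫ x in m..t, φ x := by
        rw [show c * (-c * ∫ x in m..t, φ x) = -(c^2) * ∫ x in m..t, φ x by ring, hc2]
      linarith [this]
    -- lower bound for D on [m, t₁]
    have hDlb : ∀ t ∈ Icc m t₁, μ * ψ m * (t - m) ≤ D t := by
      intro t htmem
      obtain ⟨hmt, htt₁⟩ := htmem
      have ht0 : 0 < t := lt_of_lt_of_le hm0 hmt
      rw [hDformula t ⟨hmt, htt₁⟩]
      have hsub : Set.uIcc m t ⊆ Ici (0:ℝ) := by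
        rw [Set.uIcc_of_le hmt]
        exact fun x hx => le_trans hm0.le hx.1
      have hint1 : IntervalIntegrable (fun x => 2 * μ * η x - 2 * μ * φ x) volume m t :=
        ((continuousOn_const.mul (hηcont.mono hsub)).sub
          ((continuous_const.mul hφcont : Continuous fun x => 2 * μ * φ x).continuousOn)).intervalIntegrable
      have hint2 : IntervalIntegrable (fun x => η'' x - 2 * μ * φ x) volume m t :=
        (hη''int' t ht0).sub (((continuous_const.mul hφcont : Continuous fun x => 2 * μ * φ x).continuousOn).intervalIntegrable)
      have step1 : (∫ x in m..t, (2 * μ * η x - 2 * μ * φ x))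
          ≤ ∫ x in m..t, (η'' x - 2 * μ * φ x) := by
        apply intervalIntegral.integral_mono_ae_restrict hmt hint1 hint2
        have hres : ∀ᵐ x ∂(volume.restrict (Icc m t)), 0 ≤ x → 2 * μ * η x ≤ η'' x :=
          ae_restrict_of_ae hineq
        have hmem := ae_restrict_mem (μ := volume) (measurableSet_Icc (a := m) (b := t))
        filter_upwards [hres, hmem] with x h1 h2
        have hx0 : (0:ℝ) ≤ x := le_trans hm0.le h2.1
        have := h1 hx0
        linarith
      have step2 : (∫ x in m..t, (fun _ => μ * ψ m) x)
          ≤ ∫ x in m..t, (2 * μ * η x - 2 * μ * φ x) := by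
        apply intervalIntegral.integral_mono_on hmt
          (intervalIntegrable_const) hint1
        intro x hx
        have hx' : x ∈ Icc m t₁ := ⟨hx.1, le_trans hx.2 htt₁⟩
        have h1 := hψlower x hx'
        have h2 : 2 * μ * η x - 2 * μ * φ x = 2 * μ * ψ x := by simp only [hψ]; ring
        rw [h2]
        calc μ * ψ m = 2 * μ * (ψ m / 2) := by ring
          _ ≤ 2 * μ * ψ x := mul_le_mul_of_nonneg_left h1.le (by linarith : (0:ℝ) ≤ 2 * μ)
      have hconst : (∫ x in m..t, (fun _ => μ * ψ m) x) = μ * ψ m * (t - m) := by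
        rw [intervalIntegral.integral_const, smul_eq_mul]
        ring
      linarith
    -- FTC for ψ on [m, t₁]
    have hmt₁ : m ≤ t₁ := by simp only [ht₁]; linarith
    have hsub₁ : Set.uIcc m t₁ ⊆ Ici (0:ℝ) := by
      rw [Set.uIcc_of_le hmt₁]
      exact fun x hx => le_trans hm0.le hx.1
    have hψFTC : (∫ t in m..t₁, D t) = ψ t₁ - ψ m := by
      apply intervalIntegral.integral_eq_sub_of_hasDerivAt
      · intro x hx
        have hx0 : 0 < x := lt_of_lt_of_le hm0 ((Set.uIcc_of_le hmt₁ ▸ hx).1)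
        exact hψdAt x hx0
      · exact ((hDcont.mono hsub₁)).intervalIntegrable
    have hmono : (∫ t in m..t₁, μ * ψ m * (t - m)) ≤ ∫ t in m..t₁, D t := by
      apply intervalIntegral.integral_mono_on hmt₁
      · exact (continuous_const.mul (continuous_id.sub continuous_const) : Continuous fun t => μ * ψ m * (t - m)).intervalIntegrable _ _
      · exact ((hDcont.mono hsub₁)).intervalIntegrable
      · exact hDlb
    have hcomp : (∫ t in m..t₁, μ * ψ m * (t - m)) = μ * ψ m * (e ^ 2 / 2) := by
      rw [show (fun t => μ * ψ m * (t - m)) = fun t => μ * ψ m * (t - m) from rfl]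
      rw [intervalIntegral.integral_const_mul]
      have h5 : (∫ t in m..t₁, (t - m)) = ∫ x in (m - m)..(t₁ - m), x :=
        intervalIntegral.integral_comp_sub_right (fun x => x) m
      rw [h5]
      have : m - m = 0 := by ring
      rw [this, show t₁ - m = e by simp [ht₁]]
      rw [integral_id]
      ring
    have hfinal : ψ m + μ * ψ m * (e ^ 2 / 2) ≤ ψ t₁ := by
      have := hψFTC ▸ hmono
      rw [hcomp] at this
      linarith
    have ht₁s : s ≤ t₁ := by simp only [ht₁]; linarith
    have hub : ψ t₁ ≤ ψ m := hglobal t₁ ht₁s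
    have hpos : 0 < μ * ψ m * (e ^ 2 / 2) := by positivity
    linarith
  -- Second conclusion from the key lemma via right derivative comparison
  have key2 : ∀ s : ℝ, 0 ≤ s → η' s ≤ -c * η s := by
    intro s hs
    set g : ℝ → ℝ := fun t => η s * Real.exp (-c * (t - s)) with hg
    have hgd : HasDerivAt g (-c * η s) s := by
      have h1 : HasDerivAt (fun t : ℝ => -c * (t - s)) (-c) s := by
        simpa using ((hasDerivAt_id s).sub_const s).const_mul (-c)
      have h2 := (Real.hasDerivAt_exp (-c * (s - s))).comp s h1
      have h3 := h2.const_mul (η s)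
      refine h3.congr_deriv ?_
      simp
      ring
    have hsub : Ici s ⊆ Ici (0:ℝ) := Ici_subset_Ici.mpr hs
    have hhd : HasDerivWithinAt (fun t => g t - η t) (-c * η s - η' s) (Ici s) s :=
      (hgd.hasDerivWithinAt).sub ((hC1 s hs).mono hsub)
    have h0 : g s - η s = 0 := by simp [hg]
    have hpos : ∀ t, s ≤ t → 0 ≤ g t - η t := fun t ht =>
      sub_nonneg.mpr (key s hs t ht)
    have := aux_deriv_nonneg s _ _ hhd h0 hpos
    linarith
  refine ⟨?_, ?_, ?_⟩
  · intro δ hδ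
    have h1 := key2 δ hδ
    have h2 := hnonneg δ hδ
    nlinarith
  · intro t ht
    have h1 := key2 t ht
    have h2 := hnonneg t ht
    have h3 : 0 ≤ c * η t := mul_nonneg hc0.le h2
    have h4 : c * η t ≤ -η' t := by linarith
    have h5 := mul_self_le_mul_self h3 h4
    nlinarith
  · intro δ hδ
    have := key 0 le_rfl δ hδ
    simpa using this
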